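/- Let A be a unital based ring of finite rank with basis (b_i), involution i ↦ i*, and structure constants N_{ij}^k satisfying N_{ri}^k = N_{k*r}^{i*}. Then for each j, the element z_j = Σ_i b_i b_j b_{i*} is central in A. -/

import Mathlib

/-- In a unital based ring of finite rank with basis `b`, involution `σ` on indices and
structure constants satisfying Frobenius reciprocity `N_{ri}^k = N_{σ(k) r}^{σ(i)}`, the
element `z_j = ∑ i, b i * b j * b (σ i)` is central. -/
theorem stmt2 (A : Type*) [Ring A] (ι : Type*) [Fintype ι] [DecidableEq ι]
    (b : Module.Basis ι ℤ A) (i0 : ι) (hone : b i0 = 1)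
    (σ : ι → ι) (hσ : ∀ i, σ (σ i) = i)
    (hnn : ∀ i j k, 0 ≤ b.repr (b i * b j) k)
    (hdual : ∀ i j, b.repr (b i * b j) i0 = if j = σ i then 1 else 0)
    (hfrob : ∀ r i k, b.repr (b r * b i) k = b.repr (b (σ k) * b r) (σ i))
    (j : ι) :
    ∀ x : A, x * (∑ i, b i * b j * b (σ i)) = (∑ i, b i * b j * b (σ i)) * x := by
  have hinv : Function.Involutive σ := hσ
  have key : ∀ r, b r * (∑ i, b i * b j * b (σ i)) = (∑ i, b i * b j * b (σ i)) * b r := by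
    intro r
    have expand : ∀ u : A, u = ∑ k, (b.repr u k) • b k := fun u => (b.sum_repr u).symm
    calc b r * ∑ i, b i * b j * b (σ i)
        = ∑ i, ∑ k, b.repr (b r * b i) k • (b k * b j * b (σ i)) := by
          rw [Finset.mul_sum]
          refine Finset.sum_congr rfl fun i _ => ?_
          conv_lhs => rw [show b r * (b i * b j * b (σ i)) = (b r * b i) * (b j * b (σ i)) by simp [mul_assoc],
            expand (b r * b i)]
          rw [Finset.sum_mul]
          exact Finset.sum_congr rfl fun k _ => by rw [smul_mul_assoc, mul_assoc]
      _ = ∑ k, ∑ i, b.repr (b r * b i) k • (b k * b j * b (σ i)) := Finset.sum_comm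
      _ = ∑ i, ∑ k, b.repr (b (σ i) * b r) (σ k) • (b i * b j * b (σ k)) := by
          refine Finset.sum_congr rfl fun k _ => Finset.sum_congr rfl fun i _ => ?_
          rw [hfrob r i k]
      _ = ∑ i, ∑ k, b.repr (b (σ i) * b r) k • (b i * b j * b k) := by
          refine Finset.sum_congr rfl fun i _ => ?_
          exact Fintype.sum_equiv hinv.toPerm _ _ fun k => rfl
      _ = (∑ i, b i * b j * b (σ i)) * b r := by
          rw [Finset.sum_mul]
          refine Finset.sum_congr rfl fun i _ => ?_
          conv_rhs => rw [show (b i * b j * b (σ i)) * b r = (b i * b j) * (b (σ i) * b r) by simp [mul_assoc],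
            expand (b (σ i) * b r)]
          rw [Finset.mul_sum]
          exact Finset.sum_congr rfl fun k _ => by rw [mul_smul_comm, mul_assoc]
  intro x
  conv_lhs => rw [← b.sum_repr x]
  conv_rhs => rw [← b.sum_repr x]
  rw [Finset.sum_mul, Finset.mul_sum]
  refine Finset.sum_congr rfl fun r _ => ?_
  rw [smul_mul_assoc, mul_smul_comm, key]
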